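/- For any bounded sequence x of complex numbers, the logarithmic mean of x and the logarithmic mean of the Cesàro mean of x agree asymptotically: (1/log(n+2)) ∑_{k=0}^n x_k/(k+1) − (1/log(n+2)) ∑_{k=0}^n (1/(k+1)) · ((1/(k+1)) ∑_{l=0}^k x_l) tends to 0 as n → ∞. -/

import Mathlib

open Filter Finset

private lemma tele_aux (f : ℕ → ℝ) {l m : ℕ} (h : l ≤ m) :
    ∑ k ∈ Ico l m, (f k - f (k+1)) = f l - f m := by
  rw [Finset.sum_Ico_eq_sub _ h, Finset.sum_range_sub' f, Finset.sum_range_sub' f]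
  ring

private lemma diff_eq (k : ℕ) :
    ((k:ℝ)+1)⁻¹ - ((k:ℝ)+2)⁻¹ = (((k:ℝ)+1) * ((k:ℝ)+2))⁻¹ := by
  have h1 : (0:ℝ) < (k:ℝ)+1 := by positivity
  have h2 : (0:ℝ) < (k:ℝ)+2 := by positivity
  field_simp
  norm_num

private lemma term_lb (k : ℕ) :
    ((k:ℝ)+1)⁻¹ - ((k:ℝ)+2)⁻¹ ≤ ((k:ℝ)+1)⁻¹ * ((k:ℝ)+1)⁻¹ := by
  rw [diff_eq, ← mul_inv]
  exact inv_anti₀ (by positivity) (by nlinarith [Nat.cast_nonneg (α := ℝ) k])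

private lemma term_ub (k : ℕ) :
    ((k:ℝ)+1)⁻¹ * ((k:ℝ)+1)⁻¹ ≤
      (((k:ℝ)+1)⁻¹ - ((k:ℝ)+2)⁻¹)
        + (((k:ℝ)+1)⁻¹ * ((k:ℝ)+1)⁻¹ - ((k:ℝ)+2)⁻¹ * ((k:ℝ)+2)⁻¹) := by
  rw [diff_eq, ← sub_nonneg]
  have h : ((k:ℝ)+2)⁻¹ * ((k:ℝ)+2)⁻¹ ≤ (((k:ℝ)+1) * ((k:ℝ)+2))⁻¹ := by
    rw [← mul_inv]
    exact inv_anti₀ (by positivity) (by nlinarith [Nat.cast_nonneg (α := ℝ) k])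
  linarith

/-- the real coefficient -/
private noncomputable def cc (n l : ℕ) : ℝ :=
  ((l:ℝ)+1)⁻¹ - ∑ k ∈ Ico l (n+1), ((k:ℝ)+1)⁻¹ * ((k:ℝ)+1)⁻¹

private lemma cc_abs_le {n l : ℕ} (hl : l < n + 1) :
    |cc n l| ≤ ((n:ℝ)+2)⁻¹ + ((l:ℝ)+1)⁻¹ * ((l:ℝ)+1)⁻¹ := by
  have hln : l ≤ n + 1 := hl.le
  set f : ℕ → ℝ := fun k => ((k:ℝ)+1)⁻¹ with hf
  set g : ℕ → ℝ := fun k => ((k:ℝ)+1)⁻¹ * ((k:ℝ)+1)⁻¹ with hg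
  have hfk : ∀ k : ℕ, f (k+1) = ((k:ℝ)+2)⁻¹ := by
    intro k; simp only [hf]; push_cast; ring_nf
  have hgk : ∀ k : ℕ, g (k+1) = ((k:ℝ)+2)⁻¹ * ((k:ℝ)+2)⁻¹ := by
    intro k; simp only [hg]; push_cast; ring_nf
  -- lower bound for the sum
  have hsum_lb : f l - f (n+1) ≤ ∑ k ∈ Ico l (n+1), g k := by
    rw [← tele_aux f hln]
    apply Finset.sum_le_sum
    intro k _
    rw [hfk k]
    exact term_lb k
  -- upper bound for the sum
  have hsum_ub : ∑ k ∈ Ico l (n+1), g k ≤ (f l - f (n+1)) + (g l - g (n+1)) := by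
    rw [← tele_aux f hln, ← tele_aux g hln, ← Finset.sum_add_distrib]
    apply Finset.sum_le_sum
    intro k _
    rw [hfk k, hgk k]
    exact term_ub k
  have hfn : f (n+1) = ((n:ℝ)+2)⁻¹ := hfk n
  have hgnn : 0 ≤ g (n+1) := by
    rw [hgk n]; positivity
  have h1 : cc n l ≤ ((n:ℝ)+2)⁻¹ := by
    unfold cc
    have : ∑ k ∈ Ico l (n+1), ((k:ℝ)+1)⁻¹ * ((k:ℝ)+1)⁻¹ = ∑ k ∈ Ico l (n+1), g k := rfl
    rw [this]
    have := hsum_lb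
    simp only [hf] at this ⊢
    linarith [this, hfn ▸ (le_refl (f (n+1)))]
  have h2 : -(((n:ℝ)+2)⁻¹ + g l) ≤ cc n l := by
    unfold cc
    have : ∑ k ∈ Ico l (n+1), ((k:ℝ)+1)⁻¹ * ((k:ℝ)+1)⁻¹ = ∑ k ∈ Ico l (n+1), g k := rfl
    rw [this]
    have hn2 : (0:ℝ) ≤ ((n:ℝ)+2)⁻¹ := by positivity
    have hfl : f l = ((l:ℝ)+1)⁻¹ := rfl
    linarith [hsum_ub]
  have h3 : |cc n l| ≤ ((n:ℝ)+2)⁻¹ + g l := by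
    rw [abs_le]
    constructor
    · exact h2
    · have : (0:ℝ) ≤ g l := by simp only [hg]; positivity
      linarith
  exact h3

/-- For any bounded sequence `x` of complex numbers, the logarithmic mean
of `x` and the logarithmic mean of the Cesàro mean of `x` agree asymptotically. -/
theorem log_mean_sub_log_mean_cesaro_tendsto_zero
    (x : ℕ → ℂ) (hx : ∃ K : ℝ, ∀ n, ‖x n‖ ≤ K) :
    Tendsto (fun n : ℕ =>
        ((Real.log (n + 2) : ℂ))⁻¹ * ∑ k ∈ range (n + 1), x k / (k + 1)
      - ((Real.log (n + 2) : ℂ))⁻¹ * ∑ k ∈ range (n + 1),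
          ((k : ℂ) + 1)⁻¹ * (((k : ℂ) + 1)⁻¹ * ∑ l ∈ range (k + 1), x l))
      atTop (nhds 0) := by
  obtain ⟨K, hK⟩ := hx
  have hK0 : 0 ≤ K := le_trans (norm_nonneg (x 0)) (hK 0)
  -- the combined difference of sums is uniformly bounded by 3K
  have key : ∀ n : ℕ,
      ‖(∑ k ∈ range (n + 1), x k / (k + 1))
        - ∑ k ∈ range (n + 1), ((k : ℂ) + 1)⁻¹ * (((k : ℂ) + 1)⁻¹ * ∑ l ∈ range (k + 1), x l)‖
        ≤ 3 * K := by
    intro n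
    -- rewrite the second sum by swapping the order of summation
    have swap : ∑ k ∈ range (n + 1), ((k : ℂ) + 1)⁻¹ * (((k : ℂ) + 1)⁻¹ * ∑ l ∈ range (k + 1), x l)
        = ∑ l ∈ range (n + 1), x l * ∑ k ∈ Ico l (n+1), (((k : ℂ) + 1)⁻¹ * ((k : ℂ) + 1)⁻¹) := by
      have h1 : ∀ k : ℕ, ((k : ℂ) + 1)⁻¹ * (((k : ℂ) + 1)⁻¹ * ∑ l ∈ range (k + 1), x l)
          = ∑ l ∈ range (k+1), (((k : ℂ) + 1)⁻¹ * ((k : ℂ) + 1)⁻¹) * x l := by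
        intro k
        simp only [Finset.mul_sum]
        exact Finset.sum_congr rfl fun l _ => by ring
      simp only [h1]
      simp only [Finset.range_eq_Ico]
      rw [← Finset.sum_Ico_Ico_comm 0 (n+1) (fun l k => (((k : ℂ) + 1)⁻¹ * ((k : ℂ) + 1)⁻¹) * x l)]
      · apply Finset.sum_congr rfl
        intro l _
        rw [Finset.mul_sum]
        apply Finset.sum_congr rfl
        intro k _
        ring
    rw [swap, ← Finset.sum_sub_distrib]
    have hterm : ∀ l ∈ range (n+1),
        x l / (l + 1) - x l * ∑ k ∈ Ico l (n+1), (((k : ℂ) + 1)⁻¹ * ((k : ℂ) + 1)⁻¹)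
          = x l * (cc n l : ℂ) := by
      intro l _
      unfold cc
      push_cast
      rw [div_eq_mul_inv]
      ring
    rw [Finset.sum_congr rfl hterm]
    calc ‖∑ l ∈ range (n+1), x l * (cc n l : ℂ)‖
        ≤ ∑ l ∈ range (n+1), ‖x l * (cc n l : ℂ)‖ := norm_sum_le _ _
      _ ≤ ∑ l ∈ range (n+1), K * |cc n l| := by
          apply Finset.sum_le_sum
          intro l _
          rw [norm_mul, Complex.norm_real, Real.norm_eq_abs]
          exact mul_le_mul_of_nonneg_right (hK l) (abs_nonneg _)
      _ = K * ∑ l ∈ range (n+1), |cc n l| := by rw [Finset.mul_sum]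
      _ ≤ K * 3 := by
          apply mul_le_mul_of_nonneg_left _ hK0
          calc ∑ l ∈ range (n+1), |cc n l|
              ≤ ∑ l ∈ range (n+1), (((n:ℝ)+2)⁻¹ + ((l:ℝ)+1)⁻¹ * ((l:ℝ)+1)⁻¹) := by
                apply Finset.sum_le_sum
                intro l hl
                exact cc_abs_le (Finset.mem_range.mp hl)
            _ = (n+1) * ((n:ℝ)+2)⁻¹ + ∑ l ∈ range (n+1), ((l:ℝ)+1)⁻¹ * ((l:ℝ)+1)⁻¹ := by
                rw [Finset.sum_add_distrib, Finset.sum_const, Finset.card_range]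
                push_cast; ring
            _ ≤ 1 + 2 := by
                have hA : ((n:ℝ)+1) * ((n:ℝ)+2)⁻¹ ≤ 1 := by
                  rw [mul_inv_le_iff₀ (by positivity), one_mul]
                  linarith
                have hB : ∑ l ∈ range (n+1), ((l:ℝ)+1)⁻¹ * ((l:ℝ)+1)⁻¹ ≤ 2 := by
                  have h0 : (0:ℕ) ≤ n + 1 := Nat.zero_le _
                  have hub : ∑ l ∈ Ico 0 (n+1), ((l:ℝ)+1)⁻¹ * ((l:ℝ)+1)⁻¹
                      ≤ (((0:ℝ)+1)⁻¹ - ((n:ℝ)+2)⁻¹)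
                        + (((0:ℝ)+1)⁻¹ * ((0:ℝ)+1)⁻¹ - ((n:ℝ)+2)⁻¹ * ((n:ℝ)+2)⁻¹) := by
                    set f : ℕ → ℝ := fun k => ((k:ℝ)+1)⁻¹ with hf
                    set g : ℕ → ℝ := fun k => ((k:ℝ)+1)⁻¹ * ((k:ℝ)+1)⁻¹ with hg
                    have hfk : ∀ k : ℕ, f (k+1) = ((k:ℝ)+2)⁻¹ := by
                      intro k; simp only [hf]; push_cast; ring_nf
                    have hgk : ∀ k : ℕ, g (k+1) = ((k:ℝ)+2)⁻¹ * ((k:ℝ)+2)⁻¹ := by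
                      intro k; simp only [hg]; push_cast; ring_nf
                    have := tele_aux f h0
                    have hgt := tele_aux g h0
                    calc ∑ l ∈ Ico 0 (n+1), g l
                        ≤ ∑ k ∈ Ico 0 (n+1), ((f k - f (k+1)) + (g k - g (k+1))) := by
                          apply Finset.sum_le_sum
                          intro k _
                          rw [hfk k, hgk k]
                          exact term_ub k
                      _ = (f 0 - f (n+1)) + (g 0 - g (n+1)) := by
                          rw [Finset.sum_add_distrib, tele_aux f h0, tele_aux g h0]
                      _ = (((0:ℝ)+1)⁻¹ - ((n:ℝ)+2)⁻¹)
                        + (((0:ℝ)+1)⁻¹ * ((0:ℝ)+1)⁻¹ - ((n:ℝ)+2)⁻¹ * ((n:ℝ)+2)⁻¹) := by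
                          rw [hfk n, hgk n]
                          norm_num [hf, hg]
                  rw [← Finset.range_eq_Ico] at hub
                  have hp1 : (0:ℝ) ≤ ((n:ℝ)+2)⁻¹ := by positivity
                  have hp2 : (0:ℝ) ≤ ((n:ℝ)+2)⁻¹ * ((n:ℝ)+2)⁻¹ := by positivity
                  norm_num at hub
                  linarith
                push_cast at hA ⊢
                linarith
            _ = 3 := by norm_num
      _ = 3 * K := by ring
  -- now conclude by squeezing
  have hsq : ∀ n : ℕ,
      ‖((Real.log (n + 2) : ℂ))⁻¹ * ∑ k ∈ range (n + 1), x k / (k + 1)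
      - ((Real.log (n + 2) : ℂ))⁻¹ * ∑ k ∈ range (n + 1),
          ((k : ℂ) + 1)⁻¹ * (((k : ℂ) + 1)⁻¹ * ∑ l ∈ range (k + 1), x l)‖
        ≤ (Real.log (n + 2))⁻¹ * (3 * K) := by
    intro n
    rw [← mul_sub, norm_mul]
    have hlog : 0 < Real.log (n + 2) := by
      apply Real.log_pos
      have := Nat.cast_nonneg (α := ℝ) n
      linarith
    have h1 : ‖((Real.log (n + 2) : ℂ))⁻¹‖ = (Real.log (n + 2))⁻¹ := by
      rw [norm_inv, Complex.norm_real, Real.norm_eq_abs, abs_of_pos hlog]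
    rw [h1]
    exact mul_le_mul_of_nonneg_left (key n) (by positivity)
  apply squeeze_zero_norm hsq
  have hlogtop : Tendsto (fun n : ℕ => Real.log (n + 2)) atTop atTop := by
    apply Real.tendsto_log_atTop.comp
    apply tendsto_atTop_add_const_right
    exact tendsto_natCast_atTop_atTop
  have := (hlogtop.inv_tendsto_atTop).mul_const (3 * K)
  simpa using this
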